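/- Let E be a symmetric Dirichlet form on L²(X,m) with energy space 𝔇. Then for all u, v ∈ 𝔇 one has ‖u∧v‖_𝔇 ≤ ‖u‖_𝔇 + ‖v‖_𝔇. -/

import Mathlib

open scoped ENNReal
open MeasureTheory

noncomputable section

variable {X : Type*} [TopologicalSpace X] [MeasurableSpace X] [BorelSpace X]
variable {m : Measure X} [SigmaFinite m]

/-- Convexity for an `ℝ≥0∞`-valued functional on `L²(X,m)`. -/
def IsConvexFunctional (E : Lp ℝ 2 m → ℝ≥0∞) : Prop :=
  ∀ u v : Lp ℝ 2 m, ∀ a b : ℝ, 0 ≤ a → 0 ≤ b → a + b = 1 →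
    E (a • u + b • v) ≤ ENNReal.ofReal a * E u + ENNReal.ofReal b * E v

/-- The real function `s ↦ ½((s+α)₊ − (s−α)₋)` appearing in the second defining
inequality of Dirichlet forms. -/
def medTrunc (α s : ℝ) : ℝ :=
  (max (s + α) 0 - max (-(s - α)) 0) / 2

/-- Cipriani–Grillo: a (nonlinear) Dirichlet form is a convex, lower semicontinuous
functional `E : L²(X,m) → [0,∞]` with dense effective domain satisfying the two
structural inequalities. The second one is stated for any `w ∈ L²` which is an a.e.
representative of `½((u−v+α)₊ − (u−v−α)₋)`. -/
def IsDirichletForm (E : Lp ℝ 2 m → ℝ≥0∞) : Prop :=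
  IsConvexFunctional E ∧ LowerSemicontinuous E ∧ Dense {u : Lp ℝ 2 m | E u < ⊤} ∧
  (∀ u v : Lp ℝ 2 m, E (u ⊓ v) + E (u ⊔ v) ≤ E u + E v) ∧
  (∀ u v w : Lp ℝ 2 m, ∀ α : ℝ, 0 < α →
    (∀ᵐ x ∂m, w x = medTrunc α (u x - v x)) →
    E (v + w) + E (u - w) ≤ E u + E v)

/-- `E` is symmetric: `E 0 = 0` and `E (-u) = E u`. -/
def IsSymmetricFunctional (E : Lp ℝ 2 m → ℝ≥0∞) : Prop :=
  E 0 = 0 ∧ ∀ u : Lp ℝ 2 m, E (-u) = E u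

/-- `E₁ u = ‖u‖₂² + E u`. -/
def EOne (E : Lp ℝ 2 m → ℝ≥0∞) (u : Lp ℝ 2 m) : ℝ≥0∞ :=
  ENNReal.ofReal (‖u‖ ^ 2) + E u

/-- The Luxemburg-type norm `‖u‖_𝔇 = inf {λ > 0 | E₁(u/λ) ≤ 1}`, with `inf ∅ = ∞`. -/
def Dnorm (E : Lp ℝ 2 m → ℝ≥0∞) (u : Lp ℝ 2 m) : ℝ≥0∞ :=
  sInf (ENNReal.ofReal '' {l : ℝ | 0 < l ∧ EOne E (l⁻¹ • u) ≤ 1})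

/-- The Dirichlet space `𝔇 = {u ∈ L² | ‖u‖_𝔇 < ∞}`. -/
def Dspace (E : Lp ℝ 2 m → ℝ≥0∞) : Set (Lp ℝ 2 m) :=
  {u : Lp ℝ 2 m | Dnorm E u < ⊤}

section Aux

set_option linter.unusedSectionVars false

lemma ofReal_norm_sq_eq (f : Lp ℝ 2 m) :
    ENNReal.ofReal (‖f‖ ^ 2) = ∫⁻ x, (‖f x‖₊ : ℝ≥0∞) ^ (2 : ℝ) ∂m := by
  have h2 : ((2 : ℝ≥0∞)).toReal = (2 : ℝ) := by simp
  have hnorm : ‖f‖ = (eLpNorm f 2 m).toReal := Lp.norm_def f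
  have heq : eLpNorm f 2 m = (∫⁻ x, (‖f x‖₊ : ℝ≥0∞) ^ (2 : ℝ) ∂m) ^ (1 / (2 : ℝ)) := by
    rw [eLpNorm_eq_lintegral_rpow_enorm_toReal (by norm_num) (by norm_num), h2]
    rfl
  have hsq : (eLpNorm f 2 m) ^ (2 : ℕ) = ∫⁻ x, (‖f x‖₊ : ℝ≥0∞) ^ (2 : ℝ) ∂m := by
    rw [heq, ← ENNReal.rpow_natCast, ← ENNReal.rpow_mul]
    norm_num
  have hfin : (eLpNorm f 2 m) ^ (2 : ℕ) ≠ ⊤ := (ENNReal.pow_lt_top (Lp.eLpNorm_lt_top f) (n := 2)).ne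
  rw [hnorm, ← ENNReal.toReal_pow, ENNReal.ofReal_toReal hfin, hsq]

lemma aemeas_sq (f : Lp ℝ 2 m) :
    AEMeasurable (fun x => (‖f x‖₊ : ℝ≥0∞) ^ (2 : ℝ)) m :=
  ((Lp.aestronglyMeasurable f).aemeasurable.nnnorm.coe_nnreal_ennreal).pow_const _

lemma ofReal_norm_sq_inf_le (f g : Lp ℝ 2 m) :
    ENNReal.ofReal (‖f ⊓ g‖ ^ 2) ≤ ENNReal.ofReal (‖f‖ ^ 2) + ENNReal.ofReal (‖g‖ ^ 2) := by
  rw [ofReal_norm_sq_eq, ofReal_norm_sq_eq, ofReal_norm_sq_eq,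
    ← lintegral_add_left' (aemeas_sq f)]
  refine lintegral_mono_ae ?_
  filter_upwards [Lp.coeFn_inf f g] with x hx
  rw [hx]
  have h1 : (‖min (f x) (g x)‖₊ : ℝ≥0∞) ≤ max (‖f x‖₊ : ℝ≥0∞) (‖g x‖₊ : ℝ≥0∞) := by
    have := abs_min_le_max_abs_abs (a := f x) (b := g x)
    simp only [← Real.norm_eq_abs] at this
    rcases le_max_iff.1 this with h | h
    · exact le_max_of_le_left
        (by exact_mod_cast (by simpa [← coe_nnnorm] using h : ‖min (f x) (g x)‖₊ ≤ ‖f x‖₊))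
    · exact le_max_of_le_right
        (by exact_mod_cast (by simpa [← coe_nnnorm] using h : ‖min (f x) (g x)‖₊ ≤ ‖g x‖₊))
  calc (‖(⇑f ⊓ ⇑g) x‖₊ : ℝ≥0∞) ^ (2:ℝ)
      ≤ (max (‖f x‖₊ : ℝ≥0∞) (‖g x‖₊ : ℝ≥0∞)) ^ (2:ℝ) := by
        refine ENNReal.rpow_le_rpow ?_ (by norm_num)
        simpa using h1
    _ ≤ (‖f x‖₊ : ℝ≥0∞) ^ (2:ℝ) + (‖g x‖₊ : ℝ≥0∞) ^ (2:ℝ) := by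
        rcases max_cases (‖f x‖₊ : ℝ≥0∞) (‖g x‖₊ : ℝ≥0∞) with ⟨h, _⟩ | ⟨h, _⟩ <;> rw [h]
        · exact le_add_right le_rfl
        · exact le_add_left le_rfl

lemma smul_inf_eq (c : ℝ) (hc : 0 ≤ c) (u v : Lp ℝ 2 m) :
    c • (u ⊓ v) = (c • u) ⊓ (c • v) := by
  apply Lp.ext
  filter_upwards [Lp.coeFn_inf u v, Lp.coeFn_smul c (u ⊓ v), Lp.coeFn_inf (c • u) (c • v),
    Lp.coeFn_smul c u, Lp.coeFn_smul c v] with x h1 h2 h3 h4 h5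
  rw [h2, h3]
  simp only [Pi.smul_apply, Pi.inf_apply, h1, h4, h5, smul_eq_mul]
  exact mul_min_of_nonneg _ _ hc

lemma EOne_smul_le (E : Lp ℝ 2 m → ℝ≥0∞) (hconv : IsConvexFunctional E) (h0 : E 0 = 0)
    (u : Lp ℝ 2 m) {t : ℝ} (ht0 : 0 ≤ t) (ht1 : t ≤ 1) :
    EOne E (t • u) ≤ ENNReal.ofReal t * EOne E u := by
  have hEpart : E (t • u) ≤ ENNReal.ofReal t * E u := by
    have := hconv u 0 t (1 - t) ht0 (by linarith) (by ring)
    simpa [h0, smul_zero] using this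
  have hnorm : ENNReal.ofReal (‖t • u‖ ^ 2) ≤ ENNReal.ofReal t * ENNReal.ofReal (‖u‖ ^ 2) := by
    rw [← ENNReal.ofReal_mul ht0]
    apply ENNReal.ofReal_le_ofReal
    rw [norm_smul]
    have h1 : (‖t‖ * ‖u‖) ^ 2 = t ^ 2 * ‖u‖ ^ 2 := by
      rw [Real.norm_eq_abs, mul_pow, sq_abs]
    rw [h1]
    have : t ^ 2 ≤ t := by nlinarith
    nlinarith [sq_nonneg ‖u‖, norm_nonneg u]
  calc EOne E (t • u) = ENNReal.ofReal (‖t • u‖ ^ 2) + E (t • u) := rfl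
    _ ≤ ENNReal.ofReal t * ENNReal.ofReal (‖u‖ ^ 2) + ENNReal.ofReal t * E u :=
        add_le_add hnorm hEpart
    _ = ENNReal.ofReal t * EOne E u := by rw [EOne, mul_add]

lemma EOne_inf_le (E : Lp ℝ 2 m → ℝ≥0∞)
    (hinf : ∀ u v : Lp ℝ 2 m, E (u ⊓ v) + E (u ⊔ v) ≤ E u + E v) (f g : Lp ℝ 2 m) :
    EOne E (f ⊓ g) ≤ EOne E f + EOne E g := by
  have hE : E (f ⊓ g) ≤ E f + E g := le_trans le_self_add (hinf f g)
  calc EOne E (f ⊓ g) = ENNReal.ofReal (‖f ⊓ g‖ ^ 2) + E (f ⊓ g) := rfl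
    _ ≤ (ENNReal.ofReal (‖f‖ ^ 2) + ENNReal.ofReal (‖g‖ ^ 2)) + (E f + E g) :=
        add_le_add (ofReal_norm_sq_inf_le f g) hE
    _ = EOne E f + EOne E g := by rw [EOne, EOne]; ring

end Aux

/-- For a symmetric Dirichlet form, `‖u ∧ v‖_𝔇 ≤ ‖u‖_𝔇 + ‖v‖_𝔇`. -/
theorem Dnorm_inf_le
    (hsupp : ∀ U : Set X, IsOpen U → U.Nonempty → 0 < m U)
    (E : Lp ℝ 2 m → ℝ≥0∞) (hE : IsDirichletForm E) (hsym : IsSymmetricFunctional E) :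
    ∀ u ∈ Dspace E, ∀ v ∈ Dspace E,
      Dnorm E (u ⊓ v) ≤ Dnorm E u + Dnorm E v := by
  intro u hu v hv
  obtain ⟨hconv, _, _, hinf, _⟩ := hE
  have h0 : E 0 = 0 := hsym.1
  -- key claim
  have key : ∀ a : ℝ, 0 < a → EOne E (a⁻¹ • u) ≤ 1 →
      ∀ b : ℝ, 0 < b → EOne E (b⁻¹ • v) ≤ 1 →
      Dnorm E (u ⊓ v) ≤ ENNReal.ofReal a + ENNReal.ofReal b := by
    intro a ha hau b hb hbv
    have hab : 0 < a + b := by linarith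
    have hmem : EOne E ((a + b)⁻¹ • (u ⊓ v)) ≤ 1 := by
      rw [smul_inf_eq _ (inv_nonneg.mpr hab.le)]
      set t : ℝ := a / (a + b) with ht
      set s : ℝ := b / (a + b) with hs
      have ht0 : 0 ≤ t := div_nonneg ha.le hab.le
      have hs0 : 0 ≤ s := div_nonneg hb.le hab.le
      have hts : t + s = 1 := by rw [ht, hs, ← add_div, div_self hab.ne']
      have hu' : (a + b)⁻¹ • u = t • (a⁻¹ • u) := by
        rw [smul_smul]; congr 1; rw [ht, div_mul_eq_mul_div, mul_inv_cancel₀ ha.ne', one_div]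
      have hv' : (a + b)⁻¹ • v = s • (b⁻¹ • v) := by
        rw [smul_smul]; congr 1; rw [hs, div_mul_eq_mul_div, mul_inv_cancel₀ hb.ne', one_div]
      calc EOne E (((a + b)⁻¹ • u) ⊓ ((a + b)⁻¹ • v))
          ≤ EOne E ((a + b)⁻¹ • u) + EOne E ((a + b)⁻¹ • v) := EOne_inf_le E hinf _ _
        _ ≤ ENNReal.ofReal t * EOne E (a⁻¹ • u) + ENNReal.ofReal s * EOne E (b⁻¹ • v) := by
            rw [hu', hv']
            exact add_le_add (EOne_smul_le E hconv h0 _ ht0 (by linarith))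
              (EOne_smul_le E hconv h0 _ hs0 (by linarith))
        _ ≤ ENNReal.ofReal t * 1 + ENNReal.ofReal s * 1 :=
            add_le_add (mul_le_mul_right hau _) (mul_le_mul_right hbv _)
        _ = ENNReal.ofReal (t + s) := by
            rw [mul_one, mul_one, ENNReal.ofReal_add ht0 hs0]
        _ = 1 := by rw [hts, ENNReal.ofReal_one]
    have : ENNReal.ofReal (a + b) ∈
        ENNReal.ofReal '' {l : ℝ | 0 < l ∧ EOne E (l⁻¹ • (u ⊓ v)) ≤ 1} :=
      ⟨a + b, ⟨hab, hmem⟩, rfl⟩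
    calc Dnorm E (u ⊓ v) ≤ ENNReal.ofReal (a + b) := sInf_le this
      _ = ENNReal.ofReal a + ENNReal.ofReal b := ENNReal.ofReal_add ha.le hb.le
  -- conclude via approximation of the infima
  apply ENNReal.le_of_forall_pos_le_add
  intro ε hε hfin
  set δ : ℝ≥0∞ := (ε : ℝ≥0∞) / 2 with hδ
  have hεne : δ ≠ 0 := by
    rw [hδ]
    simp [ENNReal.div_eq_zero_iff, hε.ne']
  have hu' : Dnorm E u < Dnorm E u + δ :=
    ENNReal.lt_add_right hu.ne hεne
  have hv' : Dnorm E v < Dnorm E v + δ :=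
    ENNReal.lt_add_right hv.ne hεne
  rw [Dnorm, sInf_lt_iff] at hu' hv'
  obtain ⟨x, ⟨a, ⟨ha, hau⟩, rfl⟩, hx⟩ := hu'
  obtain ⟨y, ⟨b, ⟨hb, hbv⟩, rfl⟩, hy⟩ := hv'
  calc Dnorm E (u ⊓ v) ≤ ENNReal.ofReal a + ENNReal.ofReal b := key a ha hau b hb hbv
    _ ≤ (Dnorm E u + δ) + (Dnorm E v + δ) :=
        add_le_add hx.le hy.le
    _ = Dnorm E u + Dnorm E v + (δ + δ) := by ring
    _ = Dnorm E u + Dnorm E v + ε := by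
        rw [hδ, ENNReal.add_halves]

end
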